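/- Let X, Y be topological spaces and let T : C(X, ℝ) → C(Y, ℝ) be a lattice homomorphism (linear and preserving absolute values). Then T(√(f² + g²)) = √(T(f)² + T(g)²) for all f, g ∈ C(X, ℝ). -/

import Mathlib

open Real Filter

lemma exists_angle (p q : ℝ) (h : p^2 + q^2 = 1) :
    ∃ α : ℝ, Real.cos α = p ∧ Real.sin α = q := by
  have hp1 : -1 ≤ p := by nlinarith [sq_nonneg q]
  have hp2 : p ≤ 1 := by nlinarith [sq_nonneg q]
  rcases le_or_gt 0 q with hq | hq
  · refine ⟨Real.arccos p, Real.cos_arccos hp1 hp2, ?_⟩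
    rw [Real.sin_arccos, show 1 - p^2 = q^2 by linarith]
    exact Real.sqrt_sq hq
  · refine ⟨-Real.arccos p, by rw [Real.cos_neg]; exact Real.cos_arccos hp1 hp2, ?_⟩
    rw [Real.sin_neg, Real.sin_arccos, show 1 - p^2 = q^2 by linarith,
      Real.sqrt_sq_eq_abs, abs_of_nonpos hq.le]
    ring

lemma cs_real (u v a b : ℝ) (h : u^2 + v^2 = 1) :
    u * a + v * b ≤ Real.sqrt (a^2 + b^2) := by
  have h1 : (u*a+v*b)^2 ≤ a^2 + b^2 := by nlinarith [sq_nonneg (u*b - v*a)]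
  calc u*a+v*b ≤ |u*a+v*b| := le_abs_self _
    _ = Real.sqrt ((u*a+v*b)^2) := (Real.sqrt_sq_eq_abs _).symm
    _ ≤ Real.sqrt (a^2+b^2) := Real.sqrt_le_sqrt h1

lemma near_angle (n : ℕ) (hn : 1 ≤ n) (α : ℝ) :
    ∃ k < n, Real.cos (π / n) ≤ Real.cos (α - 2 * π * k / n) := by
  have hnpos : (0:ℝ) < n := by exact_mod_cast hn
  have hπ := Real.pi_pos
  set m : ℤ := round (α * n / (2 * π)) with hm
  have hn0 : (n:ℤ) ≠ 0 := by omega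
  refine ⟨(m % n).toNat, ?_, ?_⟩
  · have h1 : m % n < n := Int.emod_lt_of_pos m (by exact_mod_cast hn)
    omega
  · have hk : ((m % n).toNat : ℤ) = m % n :=
      Int.toNat_of_nonneg (Int.emod_nonneg m hn0)
    set q : ℤ := m / n with hq
    have hmk : m = n * q + ((m % n).toNat : ℤ) := by rw [hk]; exact (Int.mul_ediv_add_emod m n).symm
    have hkr : ((((m % n).toNat : ℕ)) : ℝ) = (m:ℝ) - n * q := by
      have : ((m:ℤ) : ℝ) = (((n:ℤ) * q + ((m % (n:ℤ)).toNat : ℤ) : ℤ) : ℝ) := by rw [← hmk]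
      push_cast at this ⊢
      linarith
    have key : α - 2*π*((m % n).toNat : ℕ)/n = (α - 2*π*m/n) + q*(2*π) := by
      rw [hkr]; field_simp; try ring
    rw [key, Real.cos_add_int_mul_two_pi]
    have e : α - 2*π*m/n = (α*n/(2*π) - m) * (2*π/n) := by field_simp; try ring
    have h2 : |α - 2*π*m/n| ≤ π/n := by
      rw [e, abs_mul, abs_of_pos (show (0:ℝ) < 2*π/n by positivity)]
      calc |α*n/(2*π) - m| * (2*π/n) ≤ (1/2) * (2*π/n) :=
            mul_le_mul_of_nonneg_right (abs_sub_round _) (by positivity)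
        _ = π/n := by field_simp
    calc Real.cos (π/n) ≤ Real.cos |α - 2*π*m/n| :=
          Real.cos_le_cos_of_nonneg_of_le_pi (abs_nonneg _)
            (div_le_self hπ.le (by exact_mod_cast hn)) h2
      _ = Real.cos (α - 2*π*m/n) := Real.cos_abs _

noncomputable def boxplus {X : Type*} [TopologicalSpace X]
    (f g : C(X, ℝ)) : C(X, ℝ) :=
  ⟨fun x => Real.sqrt (f x ^ 2 + g x ^ 2), by continuity⟩

theorem stmt_14 {X Y : Type*} [TopologicalSpace X] [TopologicalSpace Y]
    (T : C(X, ℝ) →ₗ[ℝ] C(Y, ℝ))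
    (hT : ∀ f : C(X, ℝ), T |f| = |T f|) :
    ∀ f g : C(X, ℝ), T (boxplus f g) = boxplus (T f) (T g) := by
  have hpos : ∀ k : C(X,ℝ), 0 ≤ k → 0 ≤ T k := by
    intro k hk
    have h1 : |k| = k := abs_of_nonneg hk
    have : |T k| = T k := by rw [← hT, h1]
    rw [← this]; exact abs_nonneg _
  have hmono : ∀ k m : C(X,ℝ), k ≤ m → T k ≤ T m := by
    intro k m h
    have h1 := hpos (m - k) (by rwa [sub_nonneg])
    rw [map_sub] at h1
    rwa [← sub_nonneg]
  have hsup : ∀ k m : C(X,ℝ), T (k ⊔ m) = T k ⊔ T m := by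
    intro k m
    rw [sup_eq_half_smul_add_add_abs_sub' ℝ k m, map_smul, map_add, map_add, hT, map_sub]
    exact (sup_eq_half_smul_add_add_abs_sub' ℝ (T k) (T m)).symm
  set L : SupHom C(X,ℝ) C(Y,ℝ) := ⟨fun k => T k, fun k m => hsup k m⟩ with hL
  intro f g
  -- pointwise domination
  have hbox_nonneg : (0:C(X,ℝ)) ≤ boxplus f g := by
    rw [ContinuousMap.le_def]
    intro x; exact Real.sqrt_nonneg _
  have hdom : ∀ u v : ℝ, u^2 + v^2 ≤ 1 → |u • f + v • g| ≤ boxplus f g := by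
    intro u v huv
    rw [ContinuousMap.le_def]
    intro x
    simp only [ContinuousMap.abs_apply, ContinuousMap.add_apply, ContinuousMap.smul_apply,
      smul_eq_mul]
    show |u * f x + v * g x| ≤ Real.sqrt (f x ^ 2 + g x ^ 2)
    have h1 : (u * f x + v * g x)^2 ≤ f x ^ 2 + g x ^ 2 := by
      nlinarith [sq_nonneg (u * g x - v * f x), sq_nonneg (u * f x + v * g x),
        sq_nonneg (f x), sq_nonneg (g x)]
    calc |u * f x + v * g x| = Real.sqrt ((u * f x + v * g x)^2) := (Real.sqrt_sq_eq_abs _).symm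
      _ ≤ _ := Real.sqrt_le_sqrt h1
  ext y
  show T (boxplus f g) y = Real.sqrt ((T f) y ^ 2 + (T g) y ^ 2)
  set a : ℝ := T f y
  set b : ℝ := T g y
  set c : ℝ := T (boxplus f g) y with hc
  set r : ℝ := Real.sqrt (a^2 + b^2) with hr
  have hc0 : 0 ≤ c := hpos _ hbox_nonneg y
  have habs : ∀ u v : ℝ, u^2 + v^2 ≤ 1 → |u * a + v * b| ≤ c := by
    intro u v huv
    have h1 : |T (u • f + v • g)| = T |u • f + v • g| := (hT _).symm
    have h2 : T |u • f + v • g| ≤ T (boxplus f g) := hmono _ _ (hdom u v huv)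
    have h3 : |T (u • f + v • g)| y ≤ c := by rw [h1]; exact h2 y
    simpa [map_add, map_smul] using h3
  -- direction 1 : r ≤ c
  have dir1 : r ≤ c := by
    rcases eq_or_lt_of_le (Real.sqrt_nonneg (a^2+b^2)) with h0 | h0
    · rw [hr, ← h0]; exact hc0
    · have hr2 : r^2 = a^2 + b^2 := Real.sq_sqrt (by positivity)
      have huv : (a/r)^2 + (b/r)^2 ≤ 1 := by
        rw [div_pow, div_pow, ← add_div, ← hr2, div_self (by positivity)]
      have := habs (a/r) (b/r) huv
      have heq : (a/r) * a + (b/r) * b = r := by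
        field_simp
        rw [div_eq_iff h0.ne']
        nlinarith [hr2]
      rw [heq] at this
      calc r ≤ |r| := le_abs_self r
        _ ≤ c := this
  -- direction 2 : c ≤ r
  have dir2 : ∀ n : ℕ, 1 ≤ n → Real.cos (π / n) * c ≤ r := by
    intro n hn
    have hnpos : (0:ℝ) < n := by exact_mod_cast hn
    set θ : ℕ → ℝ := fun k => 2 * π * k / n with hθ
    set F : ℕ → C(X,ℝ) := fun k => Real.cos (θ k) • f + Real.sin (θ k) • g with hF
    have hne : (Finset.range n).Nonempty := ⟨0, Finset.mem_range.2 hn⟩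
    -- Step A
    have stepA : Real.cos (π / n) • boxplus f g ≤ (Finset.range n).sup' hne F := by
      rw [ContinuousMap.le_def]
      intro x
      have hev : ((Finset.range n).sup' hne F) x = (Finset.range n).sup' hne (fun k => F k x) := by
        let E : SupHom C(X,ℝ) ℝ := ⟨fun k => k x, fun k m => rfl⟩
        exact map_finset_sup' E hne F
      rw [ContinuousMap.smul_apply, hev]
      show Real.cos (π / n) • (boxplus f g) x ≤ _
      set ρ : ℝ := Real.sqrt (f x ^ 2 + g x ^ 2) with hρ
      have hρnn : 0 ≤ ρ := Real.sqrt_nonneg _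
      have hρeq : (boxplus f g) x = ρ := rfl
      rw [hρeq]
      rcases eq_or_lt_of_le hρnn with h0 | h0
      · -- ρ = 0 : f x = 0 and g x = 0
        have hsq : f x ^ 2 + g x ^ 2 = 0 := by
          have := Real.sqrt_eq_zero (by positivity) |>.mp h0.symm
          exact this
        have hfx : f x = 0 := by nlinarith [sq_nonneg (f x), sq_nonneg (g x)]
        have hgx : g x = 0 := by nlinarith [sq_nonneg (f x), sq_nonneg (g x)]
        have : F 0 x = 0 := by simp [hF, hfx, hgx]
        calc Real.cos (π / n) • ρ = 0 := by rw [← h0]; simp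
          _ = F 0 x := this.symm
          _ ≤ _ := Finset.le_sup' (fun k => F k x) (Finset.mem_range.2 hn)
      · -- ρ > 0
        have hρ2 : ρ^2 = f x ^ 2 + g x ^ 2 := Real.sq_sqrt (by positivity)
        obtain ⟨α, hcα, hsα⟩ := exists_angle (f x / ρ) (g x / ρ) (by
          rw [div_pow, div_pow, ← add_div, ← hρ2, div_self (by positivity)])
        obtain ⟨k, hk, hck⟩ := near_angle n hn α
        have hfx : f x = ρ * Real.cos α := by field_simp at hcα; linarith [hcα]
        have hgx : g x = ρ * Real.sin α := by field_simp at hsα; linarith [hsα]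
        have hFval : F k x = ρ * Real.cos (α - θ k) := by
          simp only [hF, ContinuousMap.add_apply, ContinuousMap.smul_apply, smul_eq_mul]
          rw [Real.cos_sub, hfx, hgx]
          ring
        calc Real.cos (π / n) • ρ = ρ * Real.cos (π / n) := by rw [smul_eq_mul]; ring
          _ ≤ ρ * Real.cos (α - θ k) := by
              apply mul_le_mul_of_nonneg_left _ hρnn
              exact hck
          _ = F k x := hFval.symm
          _ ≤ _ := Finset.le_sup' (fun k => F k x) (Finset.mem_range.2 hk)
    -- Step B/C
    have hTF : ∀ k, T (F k) y = Real.cos (θ k) * a + Real.sin (θ k) * b := by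
      intro k
      simp [hF, map_add, map_smul]
      rfl
    have stepB : T ((Finset.range n).sup' hne F) y
        = (Finset.range n).sup' hne (fun k => T (F k) y) := by
      have h1 : T ((Finset.range n).sup' hne F) = (Finset.range n).sup' hne (fun k => T (F k)) :=
        map_finset_sup' L hne F
      rw [h1]
      let E : SupHom C(Y,ℝ) ℝ := ⟨fun k => k y, fun k m => rfl⟩
      exact map_finset_sup' E hne _
    have stepC : (Finset.range n).sup' hne (fun k => T (F k) y) ≤ r := by
      apply Finset.sup'_le
      intro k _
      rw [hTF k]
      exact cs_real _ _ a b (Real.cos_sq_add_sin_sq _)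
    have hmain : Real.cos (π / n) * c ≤ T ((Finset.range n).sup' hne F) y := by
      have h1 := hmono _ _ stepA
      have h2 := h1 y
      rw [map_smul] at h2
      simpa using h2
    linarith [hmain, stepB ▸ stepC]
  -- limit
  have hlim : Tendsto (fun n : ℕ => Real.cos (π / n) * c) atTop (nhds c) := by
    have h1 : Tendsto (fun n : ℕ => π / (n:ℝ)) atTop (nhds 0) :=
      tendsto_const_div_atTop_nhds_zero_nat π
    have h2 : Tendsto (fun n : ℕ => Real.cos (π / n)) atTop (nhds 1) := by
      have := (Real.continuous_cos.tendsto 0).comp h1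
      simpa [Function.comp_def] using this
    have := h2.mul_const c
    simpa using this
  have dir2' : c ≤ r := by
    apply le_of_tendsto hlim
    filter_upwards [eventually_ge_atTop 1] with n hn using dir2 n hn
  linarith
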